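/- arXiv:1802.07040 — 4 statements merged into one kernel-verified Lean document; each statement's English description precedes it below -/
import Mathlib

section
/- Let a > 0 and ω ∈ ℝ, and set h = −a²ω²/((1−a)(−ω²) + 2jω + 1) (assuming the denominator (1−a)(jω)² + 2jω + 1 ≠ 0). Define z = exp(j·arctan(1/ω)) for ω ≠ 0. If a complex number F satisfies |(2/a)·F − z| ≤ 1, then F' := (F + h)/(F + h + 1) is well-defined (F + h + 1 ≠ 0) and satisfies |(2/a)·F' − z| ≤ 1. -/
set_option maxHeartbeats 2000000


open Complex Real

theorem stmt1 (a ω : ℝ) (ha : 0 < a) (hω : ω ≠ 0)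
    (hd : (1 - (a : ℂ)) * (Complex.I * ω) ^ 2 + 2 * (Complex.I * ω) + 1 ≠ 0)
    (h : ℂ)
    (hh : h = (a : ℂ) ^ 2 * (Complex.I * ω) ^ 2 /
      ((1 - (a : ℂ)) * (Complex.I * ω) ^ 2 + 2 * (Complex.I * ω) + 1))
    (z : ℂ) (hz : z = Complex.exp (Complex.I * (Real.arctan (1 / ω) : ℝ)))
    (F : ℂ) (hF : ‖(2 / (a : ℂ)) * F - z‖ ≤ 1) :
    F + h + 1 ≠ 0 ∧
      ‖(2 / (a : ℂ)) * ((F + h) / (F + h + 1)) - z‖ ≤ 1 := by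
  have haR : a ≠ 0 := ne_of_gt ha
  have haC : (a : ℂ) ≠ 0 := Complex.ofReal_ne_zero.mpr haR
  have hω2 : (0:ℝ) < ω^2 := by positivity
  have habs0 : (0:ℝ) < |ω| := abs_pos.mpr hω
  set s : ℝ := Real.sqrt (ω^2 + 1) with hsdef
  have hs0 : 0 < s := Real.sqrt_pos.mpr (by positivity)
  have hs2 : s^2 = ω^2 + 1 := Real.sq_sqrt (by positivity)
  have habs : |ω| < s := by nlinarith [_root_.sq_abs ω, abs_nonneg ω]
  -- components of z
  have hsq : Real.sqrt (1 + (1/ω)^2) = s / |ω| := by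
    have e : (s/|ω|)^2 = 1 + (1/ω)^2 := by
      rw [div_pow, _root_.sq_abs, hs2]; field_simp
    rw [← e]
    exact Real.sqrt_sq (by positivity)
  have hzre : z.re = |ω| / s := by
    rw [hz]
    simp only [Complex.exp_re, Complex.mul_re, Complex.I_re, Complex.ofReal_re,
      Complex.I_im, Complex.ofReal_im, Complex.mul_im]
    simp [Real.cos_arctan]
    rw [show (1 + (ω^2)⁻¹) = 1 + (1/ω)^2 by ring, hsq, inv_div]
  have hzim : z.im = |ω| / (ω * s) := by
    rw [hz]
    simp only [Complex.exp_im, Complex.mul_re, Complex.I_re, Complex.ofReal_re,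
      Complex.I_im, Complex.ofReal_im, Complex.mul_im]
    simp [Real.sin_arctan]
    rw [show (1 + (ω^2)⁻¹) = 1 + (1/ω)^2 by ring, hsq]
    field_simp
  have hz1 : z.re^2 + z.im^2 = 1 := by
    rw [hzre, hzim]
    field_simp
    nlinarith [_root_.sq_abs ω]
  -- components of h
  set N : ℝ := (1 - (1-a)*ω^2)^2 + 4*ω^2 with hNdef
  have hN : 0 < N := by positivity
  have hI2 : (Complex.I * (ω:ℂ))^2 = -((ω:ℂ)^2) := by
    rw [mul_pow, Complex.I_sq]; ring
  have hden : (1 - (a : ℂ)) * (Complex.I * ω) ^ 2 + 2 * (Complex.I * ω) + 1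
      = Complex.ofReal (1 - (1-a)*ω^2) + Complex.ofReal (2*ω) * Complex.I := by
    rw [hI2]; push_cast; ring
  have hnum2 : (a : ℂ)^2 * (Complex.I*ω)^2 = Complex.ofReal (-(a^2*ω^2)) := by
    rw [hI2]; push_cast; ring
  have hre : h.re = -(a^2*ω^2)*(1-(1-a)*ω^2)/N := by
    rw [hh, hden, hnum2, Complex.div_re, Complex.normSq_add_mul_I]
    simp only [Complex.add_re, Complex.add_im, Complex.ofReal_re, Complex.ofReal_im,
      Complex.mul_re, Complex.mul_im, Complex.I_re, Complex.I_im, hNdef]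
    ring
  have him : h.im = 2*a^2*ω^3/N := by
    rw [hh, hden, hnum2, Complex.div_im, Complex.normSq_add_mul_I]
    simp only [Complex.add_re, Complex.add_im, Complex.ofReal_re, Complex.ofReal_im,
      Complex.mul_re, Complex.mul_im, Complex.I_re, Complex.I_im, hNdef]
    ring
  -- key inequality K
  have key0 : s^2 -  a * |ω| *s ≤ 1 + (1-a)*ω^2 := by
    nlinarith [mul_le_mul_of_nonneg_left habs.le (mul_nonneg ha.le (abs_nonneg ω)), _root_.sq_abs ω]
  have key1 : 1 -  a * |ω| /s ≤ (1 + (1-a)*ω^2)/s^2 := by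
    rw [le_div_iff₀ (by positivity)]
    have e : (1 -  a * |ω| /s)*s^2 = s^2 -  a * |ω| *s := by field_simp
    rw [e]; exact key0
  have hLHS : (1 - a*z.re) * (h.re^2 + h.im^2) = (a^4*ω^4/N) * (1 -  a * |ω| /s) := by
    rw [hzre, hre, him]
    rcases abs_cases ω with ⟨hb, _⟩ | ⟨hb, _⟩ <;> rw [hb] <;> field_simp <;> ring
  have hRHS : a^2 * z.re * (z.re*h.re + z.im*h.im) = (a^4*ω^4/N) * ((1 + (1-a)*ω^2)/s^2) := by
    rw [hzre, hzim, hre, him]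
    rcases abs_cases ω with ⟨hb, _⟩ | ⟨hb, _⟩ <;> rw [hb] <;> field_simp <;> ring
  have hK : (1 - a*z.re) * (h.re^2 + h.im^2) ≤ a^2 * z.re * (z.re*h.re + z.im*h.im) := by
    rw [hLHS, hRHS]
    exact mul_le_mul_of_nonneg_left key1 (by positivity)
  -- hypothesis in real form
  have hc : (2/(a:ℂ)) = ((2/a : ℝ) : ℂ) := by push_cast; ring
  have hn : Complex.normSq ((2/(a:ℂ))*F - z) ≤ 1 := by
    rw [← Complex.sq_norm]
    nlinarith [norm_nonneg ((2/(a:ℂ))*F - z)]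
  have hn' : ((2/a)*F.re - z.re)^2 + ((2/a)*F.im - z.im)^2 ≤ 1 := by
    have e1 : ((2/(a:ℂ))*F - z).re = (2/a)*F.re - z.re := by
      rw [hc]; simp
    have e2 : ((2/(a:ℂ))*F - z).im = (2/a)*F.im - z.im := by
      rw [hc]; simp
    rw [Complex.normSq_apply, e1, e2] at hn
    nlinarith [hn]
  have H : F.re^2 + F.im^2 ≤ a*(z.re*F.re + z.im*F.im) := by
    have hn'' : (2*F.re - a*z.re)^2 + (2*F.im - a*z.im)^2 ≤ a^2 := by
      have e : ((2/a)*F.re - z.re)^2 + ((2/a)*F.im - z.im)^2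
          = ((2*F.re - a*z.re)^2 + (2*F.im - a*z.im)^2)/a^2 := by
        field_simp
      rw [e, div_le_one (by positivity)] at hn'
      exact hn'
    nlinarith [hn'', hz1]
  -- target inequality T
  have hzrepos : 0 < z.re := by rw [hzre]; positivity
  have hap : 0 < a * z.re := mul_pos ha hzrepos
  have hT : (1 - a*z.re) * ((F.re+h.re)^2 + (F.im+h.im)^2)
      ≤ a*(z.re*(F.re+h.re) + z.im*(F.im+h.im)) := by
    nlinarith [mul_le_mul_of_nonneg_left H hap.le, hK,
      sq_nonneg (a*z.re*F.re - (1-a*z.re)*h.re),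
      sq_nonneg (a*z.re*F.im - (1-a*z.re)*h.im), hap]
  -- nonvanishing
  have hX1 : F + h + 1 ≠ 0 := by
    intro h0
    have e1 : F.re + h.re = -1 := by
      have := congrArg Complex.re h0
      simp at this
      linarith
    have e2 : F.im + h.im = 0 := by
      have := congrArg Complex.im h0
      simpa using this
    rw [e1, e2] at hT
    norm_num at hT
  refine ⟨hX1, ?_⟩
  -- final step
  have hrw : (2/(a:ℂ))*((F+h)/(F+h+1)) - z
      = ((2/(a:ℂ))*(F+h) - z*(F+h+1))/(F+h+1) := by
    field_simp
  rw [hrw, norm_div]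
  rw [div_le_one (by
    have := norm_pos_iff.mpr hX1
    exact this)]
  -- reduce to normSq
  have hnsq : Complex.normSq ((2/(a:ℂ))*(F+h) - z*(F+h+1)) ≤ Complex.normSq (F+h+1) := by
    have enr : ((2/(a:ℂ))*(F+h) - z*(F+h+1)).re
        = (2/a)*(F.re+h.re) - (z.re*(F.re+h.re+1) - z.im*(F.im+h.im)) := by
      rw [hc]; simp [Complex.mul_re]
    have eni : ((2/(a:ℂ))*(F+h) - z*(F+h+1)).im
        = (2/a)*(F.im+h.im) - (z.re*(F.im+h.im) + z.im*(F.re+h.re+1)) := by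
      rw [hc]; simp [Complex.mul_im]
    have edr : (F+h+1).re = F.re+h.re+1 := by simp
    have edi : (F+h+1).im = F.im+h.im := by simp
    rw [Complex.normSq_apply, Complex.normSq_apply, enr, eni, edr, edi]
    have expand : ((2/a)*(F.re+h.re) - (z.re*(F.re+h.re+1) - z.im*(F.im+h.im)))
          * ((2/a)*(F.re+h.re) - (z.re*(F.re+h.re+1) - z.im*(F.im+h.im)))
        + ((2/a)*(F.im+h.im) - (z.re*(F.im+h.im) + z.im*(F.re+h.re+1)))
          * ((2/a)*(F.im+h.im) - (z.re*(F.im+h.im) + z.im*(F.re+h.re+1)))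
        - ((F.re+h.re+1)*(F.re+h.re+1) + (F.im+h.im)*(F.im+h.im))
        = (4/a^2)*((1 - a*z.re)*((F.re+h.re)^2 + (F.im+h.im)^2)
            - a*(z.re*(F.re+h.re) + z.im*(F.im+h.im)))
          + (z.re^2 + z.im^2 - 1)*((F.re+h.re+1)^2 + (F.im+h.im)^2) := by
      field_simp
      ring
    have hz0 : z.re^2 + z.im^2 - 1 = 0 := by linarith
    rw [hz0, zero_mul, add_zero] at expand
    have h5 : (1 - a*z.re)*((F.re+h.re)^2 + (F.im+h.im)^2)
        - a*(z.re*(F.re+h.re) + z.im*(F.im+h.im)) ≤ 0 := sub_nonpos.mpr hT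
    have h6 : (4/a^2) * ((1 - a*z.re)*((F.re+h.re)^2 + (F.im+h.im)^2)
        - a*(z.re*(F.re+h.re) + z.im*(F.im+h.im))) ≤ 0 :=
      mul_nonpos_of_nonneg_of_nonpos (by positivity) h5
    linarith [expand, h6]
  calc ‖(2/(a:ℂ))*(F+h) - z*(F+h+1)‖
      = Real.sqrt (Complex.normSq ((2/(a:ℂ))*(F+h) - z*(F+h+1))) := by rw [Complex.norm_def]
    _ ≤ Real.sqrt (Complex.normSq (F+h+1)) := Real.sqrt_le_sqrt hnsq
    _ = ‖F+h+1‖ := by rw [Complex.norm_def]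
end

section
/- Let a > 0, ω ∈ ℝ, ω ≠ 0, t = arctan(1/ω), and y = ω⁴(−a² + a − 1) + aω⁴·sec t − 2ω³·tan t + ω². Assume y < 0. Then Δ := 2a·cos t·(−1 − ω⁴(a − sec t)²/y) satisfies Δ ≤ 0 when cos t > 0. -/
open Real

theorem stmt6 (a ω : ℝ) (ha : 0 < a) (hω : ω ≠ 0) (t : ℝ)
    (ht : t = Real.arctan (1 / ω))
    (y : ℝ)
    (hy : y = ω ^ 4 * (-a ^ 2 + a - 1) + a * ω ^ 4 * (1 / Real.cos t)
      - 2 * ω ^ 3 * Real.tan t + ω ^ 2)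
    (hyneg : y < 0) (hcos : 0 < Real.cos t) :
    2 * a * Real.cos t * (-1 - ω ^ 4 * (a - 1 / Real.cos t) ^ 2 / y) ≤ 0 := by
  set s := 1 / Real.cos t with hs
  have htan : Real.tan t = 1 / ω := by rw [ht, Real.tan_arctan]
  have hcosle : Real.cos t ≤ 1 := Real.cos_le_one t
  have hs1 : 1 ≤ s := by
    rw [hs, le_div_iff₀ hcos]; linarith
  have hs2 : s ^ 2 = 1 + (1 / ω) ^ 2 := by
    rw [hs, ht, Real.cos_arctan, one_div, one_div, inv_inv]
    rw [div_pow, one_pow, Real.sq_sqrt (by positivity)]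
  have hω2 : ω ^ 2 ≠ 0 := pow_ne_zero 2 hω
  have hinv : ω ^ 3 * (1 / ω) = ω ^ 2 := by field_simp
  have hinv2 : ω ^ 4 * (1 / ω) ^ 2 = ω ^ 2 := by field_simp
  have hkey : -y - ω ^ 4 * (a - s) ^ 2 = a * ω ^ 4 * (s - 1) := by
    rw [hy, htan]
    linear_combination 2 * hinv - ω ^ 4 * hs2 - hinv2
  have hle : ω ^ 4 * (a - s) ^ 2 ≤ -y := by
    nlinarith [mul_nonneg (mul_nonneg ha.le (by positivity : (0:ℝ) ≤ ω ^ 4)) (sub_nonneg.mpr hs1)]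
  have hdiv : -1 ≤ ω ^ 4 * (a - s) ^ 2 / y := by
    rw [le_div_iff_of_neg hyneg]; linarith
  have h2 : -1 - ω ^ 4 * (a - s) ^ 2 / y ≤ 0 := by linarith
  have h3 : 0 ≤ 2 * a * Real.cos t := by positivity
  exact mul_nonpos_of_nonneg_of_nonpos h3 h2
end

section
/- Let a > 0 and h(s) = a²s²/((1−a)s² + 2s + 1). Then for every s in the closed right half plane {s ∈ ℂ : Re s ≥ 0} for which the denominator is nonzero, h(s) is not a real number in the open interval (−4, 0). -/
open Complex

lemma quad_no_root (A B C : ℝ) (hA : 0 < A) (hB : 0 < B) (hC : 0 < C)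
    (s : ℂ) (hs : 0 ≤ s.re) : (A : ℂ) * s ^ 2 + B * s + C ≠ 0 := by
  intro heq
  have h1 := congrArg Complex.re heq
  have h2 := congrArg Complex.im heq
  simp [pow_two, Complex.mul_re, Complex.mul_im, Complex.add_re, Complex.add_im] at h1 h2
  -- h2 : A*(x*y + y*x) + B*y = 0
  have hy : s.im = 0 := by
    by_contra hy
    have h2' : s.im * (2 * A * s.re + B) = 0 := by linarith [h2]
    have hpos : 0 < 2 * A * s.re + B := by positivity
    rcases mul_eq_zero.mp h2' with h | h
    · exact hy h
    · linarith
  rw [hy] at h1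
  nlinarith [mul_nonneg (mul_nonneg hA.le hs) hs, mul_nonneg hB.le hs]

theorem stmt7 (a : ℝ) (ha : 0 < a) :
    ∀ s : ℂ, 0 ≤ s.re →
      (1 - (a : ℂ)) * s ^ 2 + 2 * s + 1 ≠ 0 →
      ∀ r : ℝ, r ∈ Set.Ioo (-4 : ℝ) 0 →
        (a : ℂ) ^ 2 * s ^ 2 / ((1 - (a : ℂ)) * s ^ 2 + 2 * s + 1) ≠ (r : ℂ) := by
  intro s hs hden r hr heq
  obtain ⟨hr1, hr2⟩ := hr
  have hmul : (a : ℂ) ^ 2 * s ^ 2 = (r : ℂ) * ((1 - (a : ℂ)) * s ^ 2 + 2 * s + 1) := by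
    rw [div_eq_iff hden] at heq
    linear_combination heq
  have hA : 0 < a ^ 2 - r * (1 - a) := by
    rcases le_or_gt a 1 with h | h
    · nlinarith
    · nlinarith [sq_nonneg (a - 2)]
  have hB : 0 < -(2 * r) := by linarith
  have hC : 0 < -r := by linarith
  have key := quad_no_root (a ^ 2 - r * (1 - a)) (-(2 * r)) (-r) hA hB hC s hs
  apply key
  push_cast
  linear_combination hmul
end

section
/- Fix a complex number h with h + 1 ≠ 0 and consider the Möbius map φ(w) = (w + h)/(w + h + 1) on ℂ. If h is not a real number in the interval (−4, 0), then the closed disc D = {w : |(2/a)w − z| ≤ 1} (for suitable a > 0, |z| = 1 determined by h as in the canonical parametrization) avoids the pole w = −h − 1 of φ, i.e., −h−1 ∉ D. -/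
open Complex Real

lemma key_pos' (a c x : ℝ) (ha : 0 < a) (hx : 0 < x) (hc : 1 < c) :
    0 < c * ((1 + (a - 1) * x - a ^ 2 * x) ^ 2 + 4 * x) +
      a * ((1 + (a - 1) * x) ^ 2 - a ^ 2 * x * (1 + (a - 1) * x) + 4 * x + 2 * a ^ 2 * x) := by
  have hM : 0 < (1 + (a - 1) * x - a ^ 2 * x) ^ 2 + 4 * x := by positivity
  have hid : c * ((1 + (a - 1) * x - a ^ 2 * x) ^ 2 + 4 * x) +
      a * ((1 + (a - 1) * x) ^ 2 - a ^ 2 * x * (1 + (a - 1) * x) + 4 * x + 2 * a ^ 2 * x)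
      = (c - 1) * ((1 + (a - 1) * x - a ^ 2 * x) ^ 2 + 4 * x) +
        ((1 + a) * ((1 + (a - 1) * x - a ^ 2 * x) ^ 2 + 4 * x) +
          a ^ 3 * x * ((1 + (a - 1) * x) + 2 - a ^ 2 * x)) := by ring
  have hT : 0 < (1 + a) * ((1 + (a - 1) * x - a ^ 2 * x) ^ 2 + 4 * x) +
      a ^ 3 * x * ((1 + (a - 1) * x) + 2 - a ^ 2 * x) := by
    nlinarith [mul_nonneg (sq_nonneg ((a - 1) * x)) ha.le, sq_nonneg ((a - 1) * x),
      mul_pos ha (mul_pos hx hx), mul_pos ha hx, mul_pos (mul_pos (mul_pos ha ha) ha) hx]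
  nlinarith [mul_pos (sub_pos.mpr hc) hM]

theorem stmt11 (a ω : ℝ) (ha : 0 < a) (hω : ω ≠ 0)
    (hd : (1 - (a : ℂ)) * (Complex.I * ω) ^ 2 + 2 * (Complex.I * ω) + 1 ≠ 0)
    (h : ℂ)
    (hh : h = (a : ℂ) ^ 2 * (Complex.I * ω) ^ 2 /
      ((1 - (a : ℂ)) * (Complex.I * ω) ^ 2 + 2 * (Complex.I * ω) + 1))
    (z : ℂ) (hz : z = Complex.exp (Complex.I * (Real.arctan (1 / ω) : ℝ)))
    (hpole : h + 1 ≠ 0)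
    (hstrip : ∀ r : ℝ, r ∈ Set.Ioo (-4 : ℝ) 0 → h ≠ (r : ℂ)) :
    1 < ‖(2 / (a : ℂ)) * (-h - 1) - z‖ := by
  set c : ℝ := Real.sqrt (1 + (1 / ω) ^ 2) with hcdef
  have hc2 : c ^ 2 = 1 + (1 / ω) ^ 2 := Real.sq_sqrt (by positivity)
  have hinv : 0 < (1 / ω) ^ 2 := by positivity
  have hc1 : 1 < c := by nlinarith [Real.sqrt_nonneg (1 + (1 / ω) ^ 2)]
  have hc0 : 0 < c := lt_trans one_pos hc1
  have hcC : (c : ℂ) ≠ 0 := by exact_mod_cast hc0.ne'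
  have haC : (a : ℂ) ≠ 0 := by exact_mod_cast ha.ne'
  have hωC : (ω : ℂ) ≠ 0 := by exact_mod_cast hω
  have hzv : z = (1 + Complex.I * ((1 / ω : ℝ) : ℂ)) / (c : ℂ) := by
    rw [hz, mul_comm, Complex.exp_mul_I, ← Complex.ofReal_cos, ← Complex.ofReal_sin,
      Real.cos_arctan, Real.sin_arctan, ← hcdef, eq_div_iff hcC]
    push_cast
    field_simp
  have hI2 : (Complex.I * (ω : ℂ)) ^ 2 = -(((ω ^ 2 : ℝ)) : ℂ) := by
    rw [mul_pow, Complex.I_sq]; push_cast; ring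
  set D : ℂ := (1 - (a : ℂ)) * (Complex.I * ω) ^ 2 + 2 * (Complex.I * ω) + 1 with hDdef
  set W : ℂ := -(2 * (c : ℂ) * (D + (a : ℂ) ^ 2 * (Complex.I * ω) ^ 2)
      + (a : ℂ) * D * (1 + Complex.I * ((1 / ω : ℝ) : ℂ))) with hWdef
  have hkey : (a : ℂ) * (c : ℂ) * D * ((2 / (a : ℂ)) * (-h - 1) - z) = W := by
    rw [hh, hzv, hWdef]
    field_simp
    ring
  have hDre : D = ((1 + (a - 1) * ω ^ 2 : ℝ) : ℂ) + ((2 * ω : ℝ) : ℂ) * Complex.I := by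
    rw [hDdef, hI2]; apply Complex.ext <;> simp <;> ring
  have hWre : W = ((-(2 * c * ((1 + (a - 1) * ω ^ 2) - a ^ 2 * ω ^ 2) + a * ((1 + (a - 1) * ω ^ 2) - 2)) : ℝ) : ℂ)
      + ((-(4 * c * ω + a * (2 * ω + (1 + (a - 1) * ω ^ 2) * (1 / ω))) : ℝ) : ℂ) * Complex.I := by
    rw [hWdef, hDdef, hI2]; apply Complex.ext <;> simp <;> field_simp <;> ring
  have hDpos : 0 < ‖D‖ := norm_pos_iff.mpr hd
  have habs : (a * c * ‖D‖) * ‖(2 / (a : ℂ)) * (-h - 1) - z‖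
      = ‖W‖ := by
    rw [← hkey]
    simp only [norm_mul, Complex.norm_real, Real.norm_eq_abs, abs_of_pos ha, abs_of_pos hc0]
  have hlt : a * c * ‖D‖ < ‖W‖ := by
    apply lt_of_pow_lt_pow_left₀ 2 (norm_nonneg W)
    rw [Complex.sq_norm W, hWre, Complex.normSq_add_mul_I, mul_pow, mul_pow,
      Complex.sq_norm D, hDre, Complex.normSq_add_mul_I]
    -- real inequality
    set P : ℝ := 1 + (a - 1) * ω ^ 2 with hP
    have hx : (0:ℝ) < ω ^ 2 := by positivity
    have hc2' : c ^ 2 * ω ^ 2 = ω ^ 2 + 1 := by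
      rw [hc2]; field_simp
    have hK := key_pos' a c (ω ^ 2) ha hx hc1
    have hV : (-(4 * c * ω + a * (2 * ω + P * (1 / ω)))) * ω
        = -(4 * c * ω ^ 2 + a * (2 * ω ^ 2 + P)) := by
      field_simp
    have hpoly : (-(2 * c * (P - a ^ 2 * ω ^ 2) + a * (P - 2))) ^ 2 * ω ^ 2
          + (-(4 * c * ω ^ 2 + a * (2 * ω ^ 2 + P))) ^ 2
          - a ^ 2 * c ^ 2 * (P ^ 2 + (2 * ω) ^ 2) * ω ^ 2
        = 4 * c * (c * ((1 + (a - 1) * ω ^ 2 - a ^ 2 * ω ^ 2) ^ 2 + 4 * ω ^ 2)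
            + a * ((1 + (a - 1) * ω ^ 2) ^ 2 - a ^ 2 * ω ^ 2 * (1 + (a - 1) * ω ^ 2)
              + 4 * ω ^ 2 + 2 * a ^ 2 * ω ^ 2)) * ω ^ 2 := by
      rw [hP]
      linear_combination (-(a ^ 2) * ((1 + (a - 1) * ω ^ 2) ^ 2 + 4 * ω ^ 2)) * hc2'
    have hKpos : 0 < 4 * c * (c * ((1 + (a - 1) * ω ^ 2 - a ^ 2 * ω ^ 2) ^ 2 + 4 * ω ^ 2)
            + a * ((1 + (a - 1) * ω ^ 2) ^ 2 - a ^ 2 * ω ^ 2 * (1 + (a - 1) * ω ^ 2)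
              + 4 * ω ^ 2 + 2 * a ^ 2 * ω ^ 2)) * ω ^ 2 := by
      have := mul_pos (mul_pos (mul_pos (by norm_num : (0:ℝ) < 4) hc0) hK) hx
      linarith [this]
    have hstep : a ^ 2 * c ^ 2 * (P ^ 2 + (2 * ω) ^ 2) * ω ^ 2
        < (-(2 * c * (P - a ^ 2 * ω ^ 2) + a * (P - 2))) ^ 2 * ω ^ 2
          + (-(4 * c * ω ^ 2 + a * (2 * ω ^ 2 + P))) ^ 2 := by
      linarith [hpoly, hKpos]
    have h2 : (-(4 * c * ω + a * (2 * ω + P * (1 / ω)))) ^ 2 * ω ^ 2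
        = (-(4 * c * ω ^ 2 + a * (2 * ω ^ 2 + P))) ^ 2 := by
      rw [← hV]; ring
    have e3 : ((-(2 * c * (P - a ^ 2 * ω ^ 2) + a * (P - 2))) ^ 2
          + (-(4 * c * ω + a * (2 * ω + P * (1 / ω)))) ^ 2) * ω ^ 2
        = (-(2 * c * (P - a ^ 2 * ω ^ 2) + a * (P - 2))) ^ 2 * ω ^ 2
          + (-(4 * c * ω ^ 2 + a * (2 * ω ^ 2 + P))) ^ 2 := by
      rw [← h2]; ring
    have hmul : a ^ 2 * c ^ 2 * (P ^ 2 + (2 * ω) ^ 2) * ω ^ 2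
        < ((-(2 * c * (P - a ^ 2 * ω ^ 2) + a * (P - 2))) ^ 2
          + (-(4 * c * ω + a * (2 * ω + P * (1 / ω)))) ^ 2) * ω ^ 2 := by
      rw [e3]; linarith [hstep]
    exact lt_of_mul_lt_mul_right hmul hx.le
  have hpos : 0 < a * c * ‖D‖ := by positivity
  have h1 : (a * c * ‖D‖) * 1 < (a * c * ‖D‖)
      * ‖(2 / (a : ℂ)) * (-h - 1) - z‖ := by
    rw [mul_one, habs]; exact hlt
  exact lt_of_mul_lt_mul_left h1 hpos.le
end
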